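/- Define w_0 = 0 and w_{k+1}^2 = w_k^2 + (Σ_{l=1}^{m-1} (m-l)/(l^2 - w_k^2))^{-1} for a fixed integer m ≥ 3. Then 0 = w_0^2 < w_1^2 < ... < w_k^2 < 1 for all k, and lim_{k→∞} w_k^2 = 1. -/

import Mathlib

open Finset Filter

theorem stmt_15 (m : ℕ) (hm : 3 ≤ m) (w : ℕ → ℝ) (hw0 : w 0 = 0)
    (hrec : ∀ k, (w (k + 1)) ^ 2 = (w k) ^ 2 +
      (∑ l ∈ Finset.Ico 1 m, ((m : ℝ) - l) / ((l : ℝ) ^ 2 - (w k) ^ 2))⁻¹) :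
    StrictMono (fun k => (w k) ^ 2) ∧ (∀ k, (w k) ^ 2 < 1) ∧
      Tendsto (fun k => (w k) ^ 2) atTop (nhds 1) := by
  set s : ℕ → ℝ := fun k => (w k) ^ 2 with hs
  have hm1 : (2:ℝ) ≤ (m:ℝ) - 1 := by
    have : (3:ℝ) ≤ (m:ℝ) := by exact_mod_cast hm
    linarith
  -- lower bound on the sum
  have hsum : ∀ x : ℝ, 0 ≤ x → x < 1 →
      ((m:ℝ) - 1)/(1 - x) ≤ ∑ l ∈ Finset.Ico 1 m, ((m : ℝ) - l) / ((l : ℝ) ^ 2 - x) := by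
    intro x hx0 hx1
    have h1m : 1 ∈ Finset.Ico 1 m := by
      simp only [Finset.mem_Ico]
      omega
    have h := Finset.single_le_sum (f := fun l : ℕ => ((m : ℝ) - l) / ((l : ℝ) ^ 2 - x))
      (fun l hl => ?_) h1m
    · simpa using h
    · rcases Finset.mem_Ico.mp hl with ⟨hl1, hlm⟩
      have h1 : (1:ℝ) ≤ (l:ℝ) := by exact_mod_cast hl1
      have h2 : (1:ℝ) ≤ (l:ℝ)^2 := by nlinarith
      have hd : 0 < (l:ℝ)^2 - x := by linarith
      have hn : 0 ≤ (m:ℝ) - l := by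
        have : (l:ℝ) ≤ (m:ℝ) := by exact_mod_cast hlm.le
        linarith
      exact div_nonneg hn hd.le
  have inv : ∀ k, 0 ≤ s k ∧ s k < 1 := by
    intro k
    induction k with
    | zero => simp [hs, hw0]
    | succ k ih =>
      obtain ⟨h0, h1⟩ := ih
      have hS := hsum (s k) h0 h1
      have hpos : (0:ℝ) < ((m:ℝ) - 1)/(1 - s k) := div_pos (by linarith) (by linarith)
      have hSpos : (0:ℝ) < ∑ l ∈ Finset.Ico 1 m, ((m : ℝ) - l) / ((l : ℝ) ^ 2 - s k) :=
        lt_of_lt_of_le hpos hS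
      have hgt : (1 - s k)⁻¹ < ∑ l ∈ Finset.Ico 1 m, ((m : ℝ) - l) / ((l : ℝ) ^ 2 - s k) := by
      -- (1-s)⁻¹ = 1/(1-s) < (m-1)/(1-s) ≤ S
        have : (1 - s k)⁻¹ < ((m:ℝ) - 1)/(1 - s k) := by
          rw [inv_eq_one_div]
          gcongr
          · linarith
        linarith
      have hinvlt : (∑ l ∈ Finset.Ico 1 m, ((m : ℝ) - l) / ((l : ℝ) ^ 2 - s k))⁻¹ < 1 - s k := by
        have h := inv_strictAnti₀ (inv_pos.mpr (by linarith : (0:ℝ) < 1 - s k)) hgt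
        rwa [inv_inv] at h
      have hrec' : s (k+1) = s k + (∑ l ∈ Finset.Ico 1 m, ((m : ℝ) - l) / ((l : ℝ) ^ 2 - s k))⁻¹ := hrec k
      constructor
      · rw [hrec']; positivity
      · rw [hrec']; linarith
  have hstep : ∀ k, s k < s (k+1) := by
    intro k
    obtain ⟨h0, h1⟩ := inv k
    have hS := hsum (s k) h0 h1
    have hpos : (0:ℝ) < ((m:ℝ) - 1)/(1 - s k) := div_pos (by linarith) (by linarith)
    have hSpos : (0:ℝ) < ∑ l ∈ Finset.Ico 1 m, ((m : ℝ) - l) / ((l : ℝ) ^ 2 - s k) :=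
      lt_of_lt_of_le hpos hS
    have := hrec k
    have : s (k+1) = s k + (∑ l ∈ Finset.Ico 1 m, ((m : ℝ) - l) / ((l : ℝ) ^ 2 - s k))⁻¹ := hrec k
    rw [this]
    have : (0:ℝ) < (∑ l ∈ Finset.Ico 1 m, ((m : ℝ) - l) / ((l : ℝ) ^ 2 - s k))⁻¹ := by positivity
    linarith
  have hmono : StrictMono s := strictMono_nat_of_lt_succ hstep
  refine ⟨hmono, fun k => (inv k).2, ?_⟩
  have hbdd : BddAbove (Set.range s) := ⟨1, by rintro x ⟨k, rfl⟩; exact (inv k).2.le⟩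
  have htend : Tendsto s atTop (nhds (⨆ k, s k)) :=
    tendsto_atTop_ciSup hmono.monotone hbdd
  set L := ⨆ k, s k with hL
  have hLk : ∀ k, s k ≤ L := fun k => le_ciSup hbdd k
  have hL1 : L ≤ 1 := ciSup_le fun k => (inv k).2.le
  have hL0 : 0 ≤ L := le_trans (inv 0).1 (hLk 0)
  have hLeq : L = 1 := by
    by_contra hne
    have hLlt : L < 1 := lt_of_le_of_ne hL1 hne
    set B := ∑ l ∈ Finset.Ico 1 m, ((m : ℝ) - l) / ((l : ℝ) ^ 2 - L) with hB
    have hBpos : 0 < B :=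
      lt_of_lt_of_le (div_pos (by linarith) (by linarith)) (hsum L hL0 hLlt)
    have hSB : ∀ k, ∑ l ∈ Finset.Ico 1 m, ((m : ℝ) - l) / ((l : ℝ) ^ 2 - s k) ≤ B := by
      intro k
      apply Finset.sum_le_sum
      intro l hl
      rcases Finset.mem_Ico.mp hl with ⟨hl1, hlm⟩
      have h1 : (1:ℝ) ≤ (l:ℝ) := by exact_mod_cast hl1
      have h2 : (1:ℝ) ≤ (l:ℝ)^2 := by nlinarith
      have hd : 0 < (l:ℝ)^2 - L := by linarith
      have hn : 0 ≤ (m:ℝ) - l := by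
        have : (l:ℝ) ≤ (m:ℝ) := by exact_mod_cast hlm.le
        linarith
      exact div_le_div_of_nonneg_left hn hd (by have := hLk k; linarith)
    have hdiff : ∀ k, B⁻¹ ≤ s (k+1) - s k := by
      intro k
      obtain ⟨h0, h1⟩ := inv k
      have hSpos : (0:ℝ) < ∑ l ∈ Finset.Ico 1 m, ((m : ℝ) - l) / ((l : ℝ) ^ 2 - s k) :=
        lt_of_lt_of_le (div_pos (by linarith) (by linarith)) (hsum (s k) h0 h1)
      have := inv_anti₀ hSpos (hSB k)
      have hrec' : s (k+1) = s k + (∑ l ∈ Finset.Ico 1 m, ((m : ℝ) - l) / ((l : ℝ) ^ 2 - s k))⁻¹ := hrec k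
      rw [hrec']
      linarith
    have hd0 : Tendsto (fun k => s (k+1) - s k) atTop (nhds 0) := by
      have h1 : Tendsto (fun k => s (k+1)) atTop (nhds L) :=
        htend.comp (tendsto_add_atTop_nat 1)
      have := h1.sub htend
      simpa using this
    have := hd0.eventually_lt_const (inv_pos.mpr hBpos)
    rcases this.exists with ⟨k, hk⟩
    exact absurd (hdiff k) (not_le.mpr hk)
  rw [← hLeq]
  exact htend
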